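/- Let λ be singular of countable cofinality, ⟨λ_n⟩ regular cardinals cofinal in λ. If S = ⟨f_α | α < μ⟩ and S' = ⟨f'_α | α < μ⟩ are both scales on ∏λ_n of the same length μ = λ⁺, then there is a club C ⊆ μ such that every δ ∈ C of uncountable cofinality is a good point of S if and only if it is a good point of S'. -/

import Mathlib

open Filter

universe u

/-- `g` is a member of the product ∏ λ_n. -/
def InProd (lam : ℕ → Ordinal) (g : ℕ → Ordinal) : Prop := ∀ n, g n < lam n

/-- Eventual domination: f ≤* g. -/
def LeStar (f g : ℕ → Ordinal) : Prop := ∀ᶠ n in atTop, f n ≤ g n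

/-- A scale of length μ on ∏ λ_n: a ≤*-increasing sequence, cofinal in the
eventual domination order. -/
def IsScale (lam : ℕ → Ordinal) (μ : Ordinal) (f : Ordinal → ℕ → Ordinal) : Prop :=
  (∀ α < μ, InProd lam (f α)) ∧
  (∀ α β, α < β → β < μ → LeStar (f α) (f β)) ∧
  (∀ g, InProd lam g → ∃ α < μ, LeStar g (f α))

/-- β is a good point of the scale f: there are n < ω and a cofinal A ⊆ β such that
for all α₀ < α₁ in A, f_{α₀}(m) ≤ f_{α₁}(m) for all m ≥ n. -/
def IsGoodPoint (f : Ordinal → ℕ → Ordinal) (β : Ordinal) : Prop :=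
  ∃ n : ℕ, ∃ A : Set Ordinal, A ⊆ Set.Iio β ∧ (∀ γ < β, ∃ δ ∈ A, γ ≤ δ) ∧
    ∀ α₀ ∈ A, ∀ α₁ ∈ A, α₀ < α₁ → ∀ m ≥ n, f α₀ m ≤ f α₁ m


private lemma leStar_trans {a b c : ℕ → Ordinal} (h1 : LeStar a b) (h2 : LeStar b c) :
    LeStar a c := by
  filter_upwards [h1, h2] with n hn hn'
  exact hn.trans hn'

set_option linter.deprecated false in
private lemma closure_unbounded (o : Ordinal.{u}) (ho : Cardinal.aleph0 < o.cof)
    (hcard : ∀ x < o, (x + 1).card < o.cof)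
    (θ : Ordinal → Ordinal) (hθ : ∀ i < o, θ i < o) {x₀ : Ordinal} (hx₀ : x₀ < o) :
    ∃ y, x₀ ≤ y ∧ y < o ∧ Order.IsSuccLimit y ∧ ∀ i < y, θ i < y := by
  have hlim : Order.IsSuccLimit o := Ordinal.aleph0_le_cof.mp ho.le
  set step : Ordinal → Ordinal :=
    fun x => max (x + 1) (Ordinal.bsup.{u,u} (x + 1) fun i _ => θ i + 1) with hstepdef
  have hstep_lt : ∀ x < o, step x < o := by
    intro x hx
    have hx1 : x + 1 < o := by rw [Ordinal.add_one_eq_succ]; exact hlim.succ_lt hx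
    apply max_lt hx1
    apply Ordinal.bsup_lt_ord (hcard x hx)
    intro i hi
    have hio : i < o := hi.trans hx1
    rw [Ordinal.add_one_eq_succ]; exact hlim.succ_lt (hθ i hio)
  have hstep_gt : ∀ x, x < step x := fun x =>
    lt_of_lt_of_le (by rw [Ordinal.add_one_eq_succ]; exact Order.lt_succ x) (le_max_left _ _)
  set s : ℕ → Ordinal := fun k => step^[k] x₀ with hsdef
  have hs0 : s 0 = x₀ := rfl
  have hssucc : ∀ k, s (k + 1) = step (s k) := fun k => Function.iterate_succ_apply' step k x₀
  have hslt : ∀ k, s k < o := by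
    intro k; induction k with
    | zero => exact hx₀
    | succ k ih => rw [hssucc]; exact hstep_lt _ ih
  have hsmono : ∀ k, s k < s (k + 1) := fun k => by rw [hssucc]; exact hstep_gt _
  refine ⟨(⨆ i, s i), ?_, ?_, ?_, ?_⟩
  · exact Ordinal.le_iSup s 0
  · exact Ordinal.iSup_lt_ord_lift (by rw [Cardinal.mk_nat, Cardinal.lift_aleph0]; exact ho) hslt
  · refine Ordinal.isSuccLimit_iff.mpr ⟨?_, Order.isSuccPrelimit_of_succ_lt ?_⟩
    · have : (0 : Ordinal) < (⨆ i, s i) :=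
        lt_of_le_of_lt (zero_le (a := s 0)) ((hsmono 0).trans_le (Ordinal.le_iSup s 1))
      exact this.ne'
    · intro a ha
      obtain ⟨m, hm⟩ := Ordinal.lt_iSup_iff.mp ha
      exact lt_of_le_of_lt (Order.succ_le_of_lt hm)
        ((hsmono m).trans_le (Ordinal.le_iSup s (m + 1)))
  · intro i hi
    obtain ⟨m, hm⟩ := Ordinal.lt_iSup_iff.mp hi
    have h1 : i < s m + 1 := hm.trans (lt_add_one _)
    have h2 : θ i + 1 ≤ Ordinal.bsup.{u,u} (s m + 1) fun i _ => θ i + 1 :=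
      Ordinal.le_bsup.{u,u} (fun i _ => θ i + 1) i h1
    have h3 : (Ordinal.bsup.{u,u} (s m + 1) fun i _ => θ i + 1) ≤ s (m + 1) := by
      rw [hssucc]; exact le_max_right _ _
    exact lt_of_lt_of_le (lt_add_one _) ((h2.trans h3).trans (Ordinal.le_iSup s (m + 1)))

set_option linter.deprecated false in
private lemma exists_cofinal_fiber {δ : Ordinal.{u}} (hδ : Cardinal.aleph0 < δ.cof)
    (N : Ordinal → ℕ) : ∃ k : ℕ, ∀ x < δ, ∃ γ, x ≤ γ ∧ γ < δ ∧ N γ = k := by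
  by_contra h
  push_neg at h
  choose b hbδ hb using h
  have hsδ : (⨆ i, b i) < δ :=
    Ordinal.iSup_lt_ord_lift (by rw [Cardinal.mk_nat, Cardinal.lift_aleph0]; exact hδ) hbδ
  exact hb (N ((⨆ i, b i))) ((⨆ i, b i)) (Ordinal.le_iSup b _) hsδ rfl

private lemma transfer {μ δ : Ordinal.{u}} {f f' : Ordinal → ℕ → Ordinal}
    (hfi : ∀ α β, α < β → β < μ → LeStar (f α) (f β))
    (hf'i : ∀ α β, α < β → β < μ → LeStar (f' α) (f' β))
    (hδμ : δ < μ) (hδ : Cardinal.aleph0 < δ.cof)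
    (I1 : ∀ x < δ, ∃ y < δ, LeStar (f x) (f' y))
    (I2 : ∀ x < δ, ∃ y < δ, LeStar (f' x) (f y))
    (hg : IsGoodPoint f δ) : IsGoodPoint f' δ := by
  obtain ⟨n, A, hAsub, hAcof, hAmono⟩ := hg
  have hlim : Order.IsSuccLimit δ := Ordinal.aleph0_le_cof.mp hδ.le
  have key : ∀ γ : Ordinal, ∃ a b c : Ordinal, ∃ N : ℕ, γ < δ →
      (a ∈ A ∧ γ < a ∧ b < δ ∧ γ < b ∧ c ∈ A ∧ b < c ∧
        ∀ m ≥ N, f a m ≤ f' b m ∧ f' b m ≤ f c m) := by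
    intro γ
    by_cases hγ : γ < δ
    · obtain ⟨a, haA, hγa⟩ := hAcof (Order.succ γ) (hlim.succ_lt hγ)
      have hγa' : γ < a := Order.succ_le_iff.mp hγa
      have haδ : a < δ := hAsub haA
      obtain ⟨y, hyδ, hy⟩ := I1 a haδ
      set b := max y (Order.succ γ) with hbdef
      have hbδ : b < δ := max_lt hyδ (hlim.succ_lt hγ)
      have hfab : LeStar (f a) (f' b) := by
        rcases lt_or_eq_of_le (le_max_left y (Order.succ γ)) with h | h
        · exact leStar_trans hy (hf'i y b h (hbδ.trans hδμ))
        · rw [hbdef, ← h]; exact hy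
      obtain ⟨z, hzδ, hz⟩ := I2 b hbδ
      obtain ⟨c, hcA, hc⟩ := hAcof (Order.succ (max z b)) (hlim.succ_lt (max_lt hzδ hbδ))
      have hzc : z < c := lt_of_le_of_lt (le_max_left z b) (Order.succ_le_iff.mp hc)
      have hbc : b < c := lt_of_le_of_lt (le_max_right z b) (Order.succ_le_iff.mp hc)
      have hfbc : LeStar (f' b) (f c) :=
        leStar_trans hz (hfi z c hzc ((hAsub hcA).trans hδμ))
      obtain ⟨N₁, hN₁⟩ := Filter.eventually_atTop.mp hfab
      obtain ⟨N₂, hN₂⟩ := Filter.eventually_atTop.mp hfbc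
      refine ⟨a, b, c, max N₁ N₂, fun _ => ⟨haA, hγa', hbδ,
        lt_of_lt_of_le (Order.lt_succ γ) (le_max_right _ _), hcA, hbc, fun m hm =>
        ⟨hN₁ m (le_trans (le_max_left _ _) hm), hN₂ m (le_trans (le_max_right _ _) hm)⟩⟩⟩
    · exact ⟨0, 0, 0, 0, fun h => absurd h hγ⟩
  choose a b c N hkey using key
  obtain ⟨k, hk⟩ := exists_cofinal_fiber hδ N
  have pickex : ∀ x : Ordinal, ∃ γ, x < δ → (x ≤ γ ∧ γ < δ ∧ N γ = k) := by
    intro x; by_cases hx : x < δ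
    · obtain ⟨γ, h⟩ := hk x hx; exact ⟨γ, fun _ => h⟩
    · exact ⟨0, fun h => absurd h hx⟩
  choose p hp using pickex
  set κ := δ.cof.ord with hκdef
  obtain ⟨π, hπ⟩ := Ordinal.exists_fundamental_sequence δ
  set PP : Ordinal → Ordinal := fun i => if h : i < κ then π i h else 0 with hPPdef
  have hPPlt : ∀ i < κ, PP i < δ := by
    intro i hi; simp only [hPPdef, dif_pos hi]; exact hπ.lt hi
  have hPPmono : ∀ i j, i < κ → j < κ → i ≤ j → PP i ≤ PP j := by
    intro i j hi hj hij
    simp only [hPPdef, dif_pos hi, dif_pos hj]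
    exact hπ.monotone hi hj hij
  have hPPcof : ∀ x < δ, ∃ i, i < κ ∧ x ≤ PP i := by
    intro x hx
    have hx' : x < Ordinal.blsub.{u,u} κ π := by rw [hπ.blsub_eq]; exact hx
    obtain ⟨i, hi, hxi⟩ := Ordinal.lt_blsub_iff.mp hx'
    refine ⟨i, hi, ?_⟩
    simpa only [hPPdef, dif_pos hi] using hxi
  set Φ : Ordinal → Ordinal := fun γ => max (b γ) (c γ) + 1 with hΦdef
  have hΦδ : ∀ γ, γ < δ → Φ γ < δ := by
    intro γ hγ
    obtain ⟨_, _, hbδ, _, hcA, _, _⟩ := hkey γ hγ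
    simp only [hΦdef, Ordinal.add_one_eq_succ]
    exact hlim.succ_lt (max_lt hbδ (hAsub hcA))
  have hΦb : ∀ γ, b γ < Φ γ :=
    fun γ => lt_of_le_of_lt (le_max_left _ _) (lt_add_one _)
  have hΦc : ∀ γ, c γ < Φ γ :=
    fun γ => lt_of_le_of_lt (le_max_right _ _) (lt_add_one _)
  have θex : ∀ i : Ordinal, ∃ j, i < κ → (j < κ ∧ Φ (p (PP i)) ≤ PP j) := by
    intro i; by_cases hi : i < κ
    · obtain ⟨hle, hpδ, hNp⟩ := hp (PP i) (hPPlt i hi)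
      obtain ⟨j, hj, hΦj⟩ := hPPcof (Φ (p (PP i))) (hΦδ _ hpδ)
      exact ⟨j, fun _ => ⟨hj, hΦj⟩⟩
    · exact ⟨0, fun h => absurd h hi⟩
  choose θ hθ using θex
  have hκcof : κ.cof = δ.cof := Ordinal.cof_cof δ
  have hκℵ : Cardinal.aleph0 < κ.cof := by rw [hκcof]; exact hδ
  have hκlim : Order.IsSuccLimit κ := Ordinal.aleph0_le_cof.mp hκℵ.le
  have hκcard : ∀ x < κ, (x + 1).card < κ.cof := by
    intro x hx
    rw [hκcof]
    have hx1 : x + 1 < κ := by rw [Ordinal.add_one_eq_succ]; exact hκlim.succ_lt hx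
    exact Cardinal.lt_ord.mp hx1
  have hθκ : ∀ i < κ, θ i < κ := fun i hi => (hθ i hi).1
  -- the separation fact
  have sep : ∀ i j, i < κ → j < κ → (∀ i' < j, θ i' < j) → i < j →
      Φ (p (PP i)) ≤ p (PP j) := by
    intro i j hi hj hjcl hij
    have h1 : Φ (p (PP i)) ≤ PP (θ i) := (hθ i hi).2
    have h2 : PP (θ i) ≤ PP j := hPPmono _ _ (hθκ i hi) hj (hjcl i hij).le
    exact (h1.trans h2).trans (hp (PP j) (hPPlt j hj)).1
  refine ⟨max n k, {x | ∃ i, i < κ ∧ (∀ i' < i, θ i' < i) ∧ x = b (p (PP i))}, ?_, ?_, ?_⟩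
  · rintro x ⟨i, hi, _, rfl⟩
    obtain ⟨hle, hpδ, hNp⟩ := hp (PP i) (hPPlt i hi)
    exact (hkey _ hpδ).2.2.1
  · intro x hx
    obtain ⟨i₀, hi₀, hxi₀⟩ := hPPcof x hx
    obtain ⟨y, hi₀y, hyκ, _, hycl⟩ := closure_unbounded κ hκℵ hκcard θ hθκ hi₀
    refine ⟨b (p (PP y)), ⟨y, hyκ, hycl, rfl⟩, ?_⟩
    obtain ⟨hle, hpδ, hNp⟩ := hp (PP y) (hPPlt y hyκ)
    have : x ≤ p (PP y) := (hxi₀.trans (hPPmono _ _ hi₀ hyκ hi₀y)).trans hle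
    exact this.trans (hkey _ hpδ).2.2.2.1.le
  · rintro x₀ ⟨i, hiκ, hicl, rfl⟩ x₁ ⟨j, hjκ, hjcl, rfl⟩ hlt m hm
    obtain ⟨hlei, hpδi, hNpi⟩ := hp (PP i) (hPPlt i hiκ)
    obtain ⟨hlej, hpδj, hNpj⟩ := hp (PP j) (hPPlt j hjκ)
    obtain ⟨haAi, _, hbδi, _, hcAi, hbci, hchi⟩ := hkey _ hpδi
    obtain ⟨haAj, hγaj, hbδj, hγbj, hcAj, _, hchj⟩ := hkey _ hpδj
    have hij : i < j := by
      rcases lt_trichotomy i j with h | h | h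
      · exact h
      · exact absurd (h ▸ hlt) (lt_irrefl _)
      · exfalso
        have := (sep j i hjκ hiκ hicl h).trans (hkey _ hpδi).2.2.2.1.le
        exact absurd (((hΦb _).trans_le this)) (not_lt_of_gt hlt)
    have hsep : Φ (p (PP i)) ≤ p (PP j) := sep i j hiκ hjκ hjcl hij
    have hca : c (p (PP i)) < a (p (PP j)) := ((hΦc _).trans_le hsep).trans hγaj
    have hmk : m ≥ k := le_trans (le_max_right n k) hm
    have step1 : f' (b (p (PP i))) m ≤ f (c (p (PP i))) m :=
      (hchi m (hNpi ▸ hmk)).2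
    have step2 : f (c (p (PP i))) m ≤ f (a (p (PP j))) m :=
      hAmono _ hcAi _ haAj hca m (le_trans (le_max_left n k) hm)
    have step3 : f (a (p (PP j))) m ≤ f' (b (p (PP j))) m :=
      (hchj m (hNpj ▸ hmk)).1
    exact (step1.trans step2).trans step3

/-- λ singular of countable cofinality, ⟨λ_n⟩ regular cardinals cofinal
in λ.  If S and S' are two scales on ∏λ_n of the same length μ = λ⁺, then there is a
club C ⊆ μ such that every δ ∈ C of uncountable cofinality is good for S iff it is
good for S'. -/
theorem good_points_scale_invariant
    (lamC : Cardinal) (hlam : Cardinal.aleph0 < lamC)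
    (hsing : lamC.ord.cof = Cardinal.aleph0)
    (lamn : ℕ → Cardinal) (hregn : ∀ n, (lamn n).IsRegular)
    (hlt : ∀ n, lamn n < lamC) (hcof : ∀ c < lamC, ∃ n, c ≤ lamn n)
    (μ : Ordinal) (hμ : μ = (Order.succ lamC).ord)
    (f f' : Ordinal → ℕ → Ordinal)
    (hf : IsScale (fun n => (lamn n).ord) μ f)
    (hf' : IsScale (fun n => (lamn n).ord) μ f') :
    ∃ C : Set Ordinal, C ⊆ Set.Iio μ ∧
      (∀ α < μ, ∃ β ∈ C, α ≤ β) ∧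
      (∀ α, α < μ → Order.IsSuccLimit α → (∀ β < α, ∃ γ ∈ C, β < γ ∧ γ < α) → α ∈ C) ∧
      (∀ δ ∈ C, Cardinal.aleph0 < δ.cof → (IsGoodPoint f δ ↔ IsGoodPoint f' δ)) := by
  have hreg : (Order.succ lamC).IsRegular := Cardinal.isRegular_succ hlam.le
  have hμcof : μ.cof = Order.succ lamC := by rw [hμ]; exact hreg.cof_eq
  have hℵμ : Cardinal.aleph0 < μ.cof := by
    rw [hμcof]; exact hlam.trans (Order.lt_succ lamC)
  have hμlim : Order.IsSuccLimit μ := Ordinal.aleph0_le_cof.mp hℵμ.le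
  have hμcard : ∀ x < μ, (x + 1).card < μ.cof := by
    intro x hx
    have hx1 : x + 1 < μ := by rw [Ordinal.add_one_eq_succ]; exact hμlim.succ_lt hx
    rw [hμcof]
    rw [hμ] at hx1
    exact Cardinal.lt_ord.mp hx1
  have Gex : ∀ x : Ordinal, ∃ y, x < μ → (y < μ ∧ LeStar (f x) (f' y)) := by
    intro x; by_cases hx : x < μ
    · obtain ⟨y, hyμ, hy⟩ := hf'.2.2 (f x) (hf.1 x hx)
      exact ⟨y, fun _ => ⟨hyμ, hy⟩⟩
    · exact ⟨0, fun h => absurd h hx⟩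
  have G'ex : ∀ x : Ordinal, ∃ y, x < μ → (y < μ ∧ LeStar (f' x) (f y)) := by
    intro x; by_cases hx : x < μ
    · obtain ⟨y, hyμ, hy⟩ := hf.2.2 (f' x) (hf'.1 x hx)
      exact ⟨y, fun _ => ⟨hyμ, hy⟩⟩
    · exact ⟨0, fun h => absurd h hx⟩
  choose G hG using Gex
  choose G' hG' using G'ex
  refine ⟨{δ | δ < μ ∧ Order.IsSuccLimit δ ∧ ∀ x < δ, G x < δ ∧ G' x < δ}, ?_, ?_, ?_, ?_⟩
  · intro δ hδ; exact hδ.1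
  · intro α hα
    obtain ⟨y, hαy, hyμ, hylim, hycl⟩ := closure_unbounded μ hℵμ hμcard
      (fun x => max (G x) (G' x))
      (fun x hx => max_lt (hG x hx).1 (hG' x hx).1) hα
    refine ⟨y, ⟨hyμ, hylim, fun x hx => ?_⟩, hαy⟩
    have := hycl x hx
    exact ⟨(le_max_left _ _).trans_lt this, (le_max_right _ _).trans_lt this⟩
  · intro α hαμ hαlim hcl
    refine ⟨hαμ, hαlim, fun x hx => ?_⟩
    obtain ⟨γ, ⟨_, _, hγcl⟩, hxγ, hγα⟩ := hcl x hx
    obtain ⟨h1, h2⟩ := hγcl x hxγ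
    exact ⟨h1.trans hγα, h2.trans hγα⟩
  · rintro δ ⟨hδμ, hδlim, hδcl⟩ hδcof
    have I1 : ∀ x < δ, ∃ y < δ, LeStar (f x) (f' y) := fun x hx =>
      ⟨G x, (hδcl x hx).1, (hG x (hx.trans hδμ)).2⟩
    have I2 : ∀ x < δ, ∃ y < δ, LeStar (f' x) (f y) := fun x hx =>
      ⟨G' x, (hδcl x hx).2, (hG' x (hx.trans hδμ)).2⟩
    exact ⟨transfer hf.2.1 hf'.2.1 hδμ hδcof I1 I2,
      transfer hf'.2.1 hf.2.1 hδμ hδcof I2 I1⟩
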